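/- Let 𝒜 be an abelian category with a central charge Z, and suppose (𝒜, Z) has the Harder–Narasimhan property. Let E be a nonzero object with HN filtration E = E_1 ⊇ ⋯ ⊇ E_p ⊇ E_{p+1} = 0. Then for every subobject F ⊆ E, the complex number Z(F) lies in the polyhedron Pol(E) := { Σ_{j=1}^{p} λ_j·Z(E_j/E_{j+1}) + c : λ_j ∈ [0,1] for all j, c ∈ ℝ_{≥0} } ⊆ ℂ. -/

import Mathlib

open CategoryTheory CategoryTheory.Limits

universe v u

/-- The phase `φ(z) ∈ (0,1]` of a complex number in `ℍ ∪ ℝ_{≤0}`, defined by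
`z = |z| exp(iπφ(z))` for `z ≠ 0`, and `φ(0) := 1`. -/
noncomputable def phase (z : ℂ) : ℝ := if z = 0 then 1 else z.arg / Real.pi

/-- An object `E` is semistable for the central charge `Z` if `φ(F) ≤ φ(E)`
for every nonzero subobject `F ⊆ E`. -/
def Semistable {C : Type u} [Category.{v} C] [Abelian C] (Z : C → ℂ) (E : C) : Prop :=
  ∀ S : Subobject E, S ≠ ⊥ → phase (Z ((S : C))) ≤ phase (Z E)

/-- The subquotient `S/T` of an object `E` attached to nested subobjects `T ≤ S ≤ E`. -/
noncomputable def subquot {C : Type u} [Category.{v} C] [Abelian C] {E : C}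
    {T S : Subobject E} (h : T ≤ S) : C :=
  cokernel (Subobject.ofLE T S h)

/-- `(𝒜, Z)` has the Harder–Narasimhan property: every nonzero object admits a finite
filtration by subobjects with nonzero semistable subquotients of strictly increasing phase. -/
def HasHNProp {C : Type u} [Category.{v} C] [Abelian C] (Z : C → ℂ) : Prop :=
  ∀ E : C, ¬IsZero E →
    ∃ (p : ℕ) (_ : 0 < p) (c : Fin (p + 1) → Subobject E)
      (hm : ∀ j : Fin p, c j.succ ≤ c j.castSucc),
      c 0 = ⊤ ∧ c (Fin.last p) = ⊥ ∧
      (∀ j : Fin p, ¬IsZero (subquot (hm j)) ∧ Semistable Z (subquot (hm j))) ∧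
      StrictMono fun j : Fin p => phase (Z (subquot (hm j)))

section Aux

variable {C : Type u} [Category.{v} C] [Abelian C]

lemma Z_isZero_aux (Z : C → ℂ)
    (hadd : ∀ S : ShortComplex C, S.ShortExact → Z S.X₂ = Z S.X₁ + Z S.X₃)
    {X : C} (hX : IsZero X) : Z X = 0 := by
  have h0 : (𝟙 X) ≫ (𝟙 X) = 0 := hX.eq_of_src _ _
  have hex : (ShortComplex.mk (𝟙 X) (𝟙 X) h0).Exact :=
    ShortComplex.exact_of_isZero_X₂ _ hX
  have h := hadd _ (ShortComplex.ShortExact.mk' hex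
    (by dsimp; infer_instance) (by dsimp; infer_instance))
  dsimp at h
  linear_combination -h

lemma Z_mono_aux (Z : C → ℂ)
    (hadd : ∀ S : ShortComplex C, S.ShortExact → Z S.X₂ = Z S.X₁ + Z S.X₃)
    {A B : C} (f : A ⟶ B) [Mono f] : Z B = Z A + Z (cokernel f) :=
  hadd (ShortComplex.mk f (cokernel.π f) (cokernel.condition f))
    (ShortComplex.ShortExact.mk'
      (ShortComplex.exact_of_g_is_cokernel _ (cokernelIsCokernel f))
      (by dsimp; infer_instance) (by dsimp; infer_instance))

lemma Z_iso_aux (Z : C → ℂ)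
    (hadd : ∀ S : ShortComplex C, S.ShortExact → Z S.X₂ = Z S.X₁ + Z S.X₃)
    {A B : C} (e : A ≅ B) : Z A = Z B := by
  have h := Z_mono_aux Z hadd e.hom
  have hz : Z (cokernel e.hom) = 0 :=
    Z_isZero_aux Z hadd ((isZero_zero C).of_iso (cokernel.ofEpi e.hom))
  rw [hz, add_zero] at h
  exact h.symm

/-- The key categorical step: for subobjects `Y ≤ X` of `E` and any subobject `F`,
`Z(F ⊓ X) = Z(F ⊓ Y) + Z(I)` where `I` embeds into `X/Y`. -/
lemma step_aux (Z : C → ℂ)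
    (hadd : ∀ S : ShortComplex C, S.ShortExact → Z S.X₂ = Z S.X₁ + Z S.X₃)
    {E : C} (F : Subobject E) {X Y : Subobject E} (h : Y ≤ X) :
    ∃ (I : C) (ι : I ⟶ subquot h), Mono ι ∧
      Z ((F ⊓ X : Subobject E) : C) = Z ((F ⊓ Y : Subobject E) : C) + Z I := by
  have hFYX : (F ⊓ Y : Subobject E) ≤ F ⊓ X := inf_le_inf_left F h
  set u : ((F ⊓ X : Subobject E) : C) ⟶ (X : C) :=
    Subobject.ofLE _ _ (inf_le_right : F ⊓ X ≤ X) with hu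
  set v : ((F ⊓ X : Subobject E) : C) ⟶ cokernel (Subobject.ofLE Y X h) :=
    u ≫ cokernel.π (Subobject.ofLE Y X h) with hv
  set m : ((F ⊓ Y : Subobject E) : C) ⟶ ((F ⊓ X : Subobject E) : C) :=
    Subobject.ofLE _ _ hFYX with hmdef
  have hmu : m ≫ u = Subobject.ofLE _ _ (inf_le_right : F ⊓ Y ≤ Y) ≫
      Subobject.ofLE Y X h := by
    rw [hmdef, hu, Subobject.ofLE_comp_ofLE, Subobject.ofLE_comp_ofLE]
  have hmv : m ≫ v = 0 := by
    rw [hv, ← Category.assoc, hmu, Category.assoc, cokernel.condition, comp_zero]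
  set e := factorThruImage v with he
  have hme : m ≫ e = 0 := by
    rw [← cancel_mono (image.ι v), Category.assoc, he, image.fac, zero_comp, hmv]
  have hlim : IsLimit (KernelFork.ofι m hme) := by
    refine KernelFork.IsLimit.ofι' m hme (fun {W} t ht => ?_)
    have htv : t ≫ v = 0 := by
      rw [← image.fac v, ← Category.assoc, ← he, ht, zero_comp]
    have hs : (t ≫ u) ≫ cokernel.π (Subobject.ofLE Y X h) = 0 := by
      rw [Category.assoc]; exact htv
    set w' : W ⟶ (Y : C) := Abelian.monoLift (Subobject.ofLE Y X h) _ hs with hw'def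
    have hw' : w' ≫ Subobject.ofLE Y X h = t ≫ u :=
      Abelian.monoLift_comp (Subobject.ofLE Y X h) _ hs
    have harr : t ≫ (F ⊓ X : Subobject E).arrow = w' ≫ Y.arrow := by
      rw [← Subobject.ofLE_arrow (inf_le_right : F ⊓ X ≤ X), ← Category.assoc, ← hu,
        ← hw', Category.assoc, Subobject.ofLE_arrow]
    have hYf : Y.Factors (t ≫ (F ⊓ X : Subobject E).arrow) := by
      rw [harr]; exact Subobject.factors_comp_arrow w'
    have hFf : F.Factors (t ≫ (F ⊓ X : Subobject E).arrow) :=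
      Subobject.factors_of_factors_right t (Subobject.inf_arrow_factors_left F X)
    have hfact : (F ⊓ Y : Subobject E).Factors (t ≫ (F ⊓ X : Subobject E).arrow) :=
      (Subobject.inf_factors _).mpr ⟨hFf, hYf⟩
    refine ⟨(F ⊓ Y : Subobject E).factorThru _ hfact, ?_⟩
    rw [← cancel_mono (F ⊓ X : Subobject E).arrow, Category.assoc, hmdef,
      Subobject.ofLE_arrow, Subobject.factorThru_arrow]
  refine ⟨image v, image.ι v, (Image.monoFactorisation v).m_mono, ?_⟩
  exact hadd (ShortComplex.mk m e hme)
    (ShortComplex.ShortExact.mk'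
      ((ShortComplex.mk m e hme).exact_of_f_is_kernel hlim)
      (by dsimp; infer_instance) (by dsimp; infer_instance))

/-- The elementary complex-number lemma: if `w = z + q` with `z, q` in the closed upper
half-plane (with the negative-real-axis convention), and `phase z ≤ phase w`, then
`z = λ w + c` with `λ ∈ [0,1]` and `c ≥ 0`. -/
lemma phase_decomp (z q w : ℂ) (hw : w = z + q) (hzim : 0 ≤ z.im) (hqim : 0 ≤ q.im)
    (hz0 : z.im = 0 → z.re ≤ 0) (hq0 : q.im = 0 → q.re ≤ 0)
    (hph : z ≠ 0 → phase z ≤ phase w) :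
    ∃ l cst : ℝ, l ∈ Set.Icc (0 : ℝ) 1 ∧ 0 ≤ cst ∧ z = (l : ℂ) * w + (cst : ℂ) := by
  by_cases hz : z = 0
  · exact ⟨0, 0, ⟨le_refl _, zero_le_one⟩, le_refl _, by simp [hz]⟩
  have hwim2 : w.im = z.im + q.im := by rw [hw]; simp
  have hwre2 : w.re = z.re + q.re := by rw [hw]; simp
  have hwim : 0 ≤ w.im := by rw [hwim2]; linarith
  rcases eq_or_lt_of_le hwim with hw0 | hwpos
  · have hzim0 : z.im = 0 := by linarith
    have hqim0 : q.im = 0 := by linarith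
    have hzre : z.re ≤ 0 := hz0 hzim0
    have hqre : q.re ≤ 0 := hq0 hqim0
    have hzrene : z.re ≠ 0 := by
      intro h0
      exact hz (Complex.ext h0 hzim0)
    have hzre' : z.re < 0 := lt_of_le_of_ne hzre hzrene
    have hwre' : w.re < 0 := by rw [hwre2]; linarith
    refine ⟨z.re / w.re, 0, ⟨div_nonneg_of_nonpos hzre hwre'.le,
      div_le_one_of_ge (by linarith) hwre'.le⟩, le_refl _, ?_⟩
    apply Complex.ext
    · simp only [Complex.add_re, Complex.mul_re, Complex.ofReal_re, Complex.ofReal_im,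
        Complex.ofReal_zero, Complex.zero_re, zero_mul, sub_zero, add_zero, ← hw0, mul_zero]
      rw [div_mul_cancel₀ _ hwre'.ne]
    · simp only [Complex.add_im, Complex.mul_im, Complex.ofReal_re, Complex.ofReal_im,
        Complex.ofReal_zero, Complex.zero_im, zero_mul, add_zero, ← hw0, mul_zero, hzim0]
  · have hwne : w ≠ 0 := by
      intro h0
      rw [h0] at hwpos
      simp at hwpos
    have harg : z.arg ≤ w.arg := by
      have hp := hph hz
      rw [phase, phase, if_neg hz, if_neg hwne] at hp
      exact (div_le_div_iff_of_pos_right Real.pi_pos).mp hp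
    have hzarg : 0 ≤ z.arg := Complex.arg_nonneg_iff.mpr hzim
    have hwarg : w.arg ≤ Real.pi := Complex.arg_le_pi w
    have hsin : 0 ≤ Real.sin (w.arg - z.arg) :=
      Real.sin_nonneg_of_nonneg_of_le_pi (by linarith) (by linarith)
    rw [Real.sin_sub] at hsin
    have hz1 := Complex.norm_mul_cos_arg z
    have hz2 := Complex.norm_mul_sin_arg z
    have hw1 := Complex.norm_mul_cos_arg w
    have hw2 := Complex.norm_mul_sin_arg w
    have habz : (0 : ℝ) ≤ ‖z‖ := norm_nonneg z
    have habw : (0 : ℝ) ≤ ‖w‖ := norm_nonneg w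
    have hcrosseq : z.re * w.im - z.im * w.re =
        (‖z‖ * ‖w‖) *
          (Real.sin w.arg * Real.cos z.arg - Real.cos w.arg * Real.sin z.arg) := by
      rw [← hz1, ← hz2, ← hw1, ← hw2]; ring
    have hcross : z.im * w.re ≤ z.re * w.im := by
      have hnn : 0 ≤ (‖z‖ * ‖w‖) *
          (Real.sin w.arg * Real.cos z.arg - Real.cos w.arg * Real.sin z.arg) :=
        mul_nonneg (mul_nonneg habz habw) hsin
      linarith [hcrosseq]
    have hwim' : z.im ≤ w.im := by rw [hwim2]; linarith
    refine ⟨z.im / w.im, z.re - (z.im / w.im) * w.re,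
      ⟨div_nonneg hzim hwpos.le, (div_le_one hwpos).mpr hwim'⟩, ?_, ?_⟩
    · rw [div_mul_eq_mul_div, sub_nonneg, div_le_iff₀ hwpos]
      exact hcross
    · apply Complex.ext
      · simp only [Complex.add_re, Complex.mul_re, Complex.ofReal_re, Complex.ofReal_im,
          zero_mul, sub_zero]
        ring
      · simp only [Complex.add_im, Complex.mul_im, Complex.ofReal_re, Complex.ofReal_im,
          zero_mul, add_zero, Complex.ofReal_im]
        field_simp

end Aux

/-- For an abelian category with central charge having the Harder–Narasimhan property, and
`E` a nonzero object with HN filtration `E = E₁ ⊇ ⋯ ⊇ E_p ⊇ E_{p+1} = 0`, every subobject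
`F ⊆ E` has `Z(F)` lying in the Harder–Narasimhan polyhedron
`Pol(E) = {∑ λⱼ Z(Eⱼ/Eⱼ₊₁) + c | λⱼ ∈ [0,1], c ∈ ℝ_{≥0}}`. -/
theorem charge_of_subobject_mem_HN_polyhedron
    {C : Type u} [Category.{v} C] [Abelian C] (Z : C → ℂ)
    (hadd : ∀ S : ShortComplex C, S.ShortExact → Z S.X₂ = Z S.X₁ + Z S.X₃)
    (him : ∀ E : C, 0 ≤ (Z E).im)
    (hre : ∀ E : C, (Z E).im = 0 → (Z E).re ≤ 0)
    (hHN : HasHNProp Z)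
    (E : C) (hE : ¬IsZero E) (p : ℕ) (hp : 0 < p)
    (c : Fin (p + 1) → Subobject E)
    (hm : ∀ j : Fin p, c j.succ ≤ c j.castSucc)
    (htop : c 0 = ⊤) (hbot : c (Fin.last p) = ⊥)
    (hss : ∀ j : Fin p, ¬IsZero (subquot (hm j)) ∧ Semistable Z (subquot (hm j)))
    (hphase : StrictMono fun j : Fin p => phase (Z (subquot (hm j)))) :
    ∀ F : Subobject E, ∃ (lam : Fin p → ℝ) (cst : ℝ),
      (∀ j, lam j ∈ Set.Icc (0 : ℝ) 1) ∧ 0 ≤ cst ∧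
      Z ((F : C)) = (∑ j, (lam j : ℂ) * Z (subquot (hm j))) + (cst : ℂ) := by
  intro F
  -- per-step decomposition
  have step : ∀ j : Fin p, ∃ lj cj : ℝ, lj ∈ Set.Icc (0 : ℝ) 1 ∧ 0 ≤ cj ∧
      Z ((F ⊓ c j.castSucc : Subobject E) : C) =
        Z ((F ⊓ c j.succ : Subobject E) : C) +
          ((lj : ℂ) * Z (subquot (hm j)) + (cj : ℂ)) := by
    intro j
    obtain ⟨I, ι, hmono, hZstep⟩ := step_aux Z hadd F (hm j)
    have : Mono ι := hmono
    have hses : Z (subquot (hm j)) = Z I + Z (cokernel ι) := Z_mono_aux Z hadd ι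
    have hph : Z I ≠ 0 → phase (Z I) ≤ phase (Z (subquot (hm j))) := by
      intro hzne
      have hInz : ¬IsZero I := fun hI => hzne (Z_isZero_aux Z hadd hI)
      have hbot' : Subobject.mk ι ≠ ⊥ := by
        intro hb
        rw [Subobject.mk_eq_bot_iff_zero] at hb
        exact hInz (IsZero.of_mono_eq_zero ι hb)
      have hsm := (hss j).2 (Subobject.mk ι) hbot'
      rwa [Z_iso_aux Z hadd (Subobject.underlyingIso ι)] at hsm
    obtain ⟨l, cst, hl, hc, heq⟩ := phase_decomp (Z I) (Z (cokernel ι))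
      (Z (subquot (hm j))) hses (him I) (him (cokernel ι)) (hre I) (hre (cokernel ι)) hph
    exact ⟨l, cst, hl, hc, by rw [hZstep, heq]⟩
  choose lam cst hIcc hc hZ using step
  refine ⟨lam, ∑ j, cst j, hIcc, Finset.sum_nonneg (fun j _ => hc j), ?_⟩
  -- telescoping
  set g : Fin (p + 1) → ℂ := fun i => Z ((F ⊓ c i : Subobject E) : C) with hg
  have hg0 : g 0 = Z ((F : C)) := by
    rw [hg]
    simp only [htop, inf_top_eq]
  have hglast : g (Fin.last p) = 0 := by
    rw [hg]
    simp only [hbot, inf_bot_eq]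
    exact Z_isZero_aux Z hadd ((isZero_zero C).of_iso Subobject.botCoeIsoZero)
  set gg : ℕ → ℂ := fun n => if hn : n < p + 1 then g ⟨n, hn⟩ else 0 with hgg
  have htel : ∑ j : Fin p, (g j.castSucc - g j.succ) = g 0 - g (Fin.last p) := by
    have e1 : ∀ j : Fin p, g j.castSucc - g j.succ = gg j.val - gg (j.val + 1) := by
      intro j
      have h1 : (j.val : ℕ) < p + 1 := Nat.lt_succ_of_lt j.isLt
      have h2 : (j.val + 1 : ℕ) < p + 1 := Nat.succ_lt_succ j.isLt
      rw [hgg]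
      simp only [dif_pos h1, dif_pos h2]
      rfl
    calc ∑ j : Fin p, (g j.castSucc - g j.succ)
        = ∑ j : Fin p, (gg j.val - gg (j.val + 1)) := Finset.sum_congr rfl (fun j _ => e1 j)
      _ = ∑ i ∈ Finset.range p, (gg i - gg (i + 1)) :=
          Fin.sum_univ_eq_sum_range (fun i => gg i - gg (i + 1)) p
      _ = gg 0 - gg p := Finset.sum_range_sub' gg p
      _ = g 0 - g (Fin.last p) := by
          rw [hgg]
          simp only [dif_pos (Nat.succ_pos p), dif_pos (Nat.lt_succ_self p)]
          rfl
  have hterm : ∀ j : Fin p, g j.castSucc - g j.succ =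
      (lam j : ℂ) * Z (subquot (hm j)) + (cst j : ℂ) := by
    intro j
    have h' := hZ j
    simp only [hg]
    rw [h']
    ring
  have hsum : ∑ j : Fin p, ((lam j : ℂ) * Z (subquot (hm j)) + (cst j : ℂ)) =
      Z ((F : C)) := by
    calc ∑ j : Fin p, ((lam j : ℂ) * Z (subquot (hm j)) + (cst j : ℂ))
        = ∑ j : Fin p, (g j.castSucc - g j.succ) :=
          Finset.sum_congr rfl (fun j _ => (hterm j).symm)
      _ = g 0 - g (Fin.last p) := htel
      _ = Z ((F : C)) := by rw [hg0, hglast, sub_zero]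
  rw [← hsum, Finset.sum_add_distrib]
  push_cast
  ring
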